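/- For each μ > 0 and each z ∈ (−μ/2, μ/2), f(μ/2) ≥ f(μ/2 + z). -/

import Mathlib

open MeasureTheory ProbabilityTheory

noncomputable section

/-- `ℓ¹` distance between two lattice points: the number of steps of an up-right path. -/
def pathLen (u v : ℤ × ℤ) : ℕ := (v.1 - u.1).natAbs + (v.2 - u.2).natAbs

/-- Up-right lattice paths from `u` to `v`, encoded as sequences of vertices. -/
def upRightPaths (u v : ℤ × ℤ) : Set (ℕ → ℤ × ℤ) :=
  {γ | γ 0 = u ∧ γ (pathLen u v) = v ∧
    ∀ i < pathLen u v, γ (i + 1) - γ i = (1, 0) ∨ γ (i + 1) - γ i = (0, 1)}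

/-- Point-to-point polymer partition function in the environment `Y`
(the weight at the starting point is excluded). -/
def Zpp (Y : ℤ × ℤ → ℝ) (u v : ℤ × ℤ) : ℝ :=
  if u = v then 0 else
    ∑' γ : upRightPaths u v, ∏ i ∈ Finset.range (pathLen u v), Y (γ.1 (i + 1))

/-- Point-to-set partition function. -/
def Zps (Y : ℤ × ℤ → ℝ) (u : ℤ × ℤ) (B : Set (ℤ × ℤ)) : ℝ :=
  ∑' b : B, Zpp Y u ↑b

/-- Set-to-set partition function. -/
def Zss (Y : ℤ × ℤ → ℝ) (A B : Set (ℤ × ℤ)) : ℝ :=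
  ∑' (a : A) (b : B), Zpp Y ↑a ↑b

/-- Partition function restricted to paths all of whose vertices lie in `S`. -/
def ZppIn (Y : ℤ × ℤ → ℝ) (S : Set (ℤ × ℤ)) (u v : ℤ × ℤ) : ℝ :=
  if u = v then 0 else
    ∑' γ : {γ : ℕ → ℤ × ℤ // γ ∈ upRightPaths u v ∧ ∀ i ≤ pathLen u v, γ i ∈ S},
      ∏ i ∈ Finset.range (pathLen u v), Y (γ.1 (i + 1))

/-- Partition function over paths some vertex of which deviates, in the anti-diagonal
direction, by `ℓ^∞`-distance more than `k` from the main diagonal; i.e. paths exiting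
one of the long sides (the ones parallel to the diagonal) of a diagonal parallelogram
of width parameter `k`. -/
def ZppExitDiag (Y : ℤ × ℤ → ℝ) (k : ℝ) (u v : ℤ × ℤ) : ℝ :=
  if u = v then 0 else
    ∑' γ : {γ : ℕ → ℤ × ℤ // γ ∈ upRightPaths u v ∧
        ∃ i ≤ pathLen u v, 2 * k < |((γ i).1 : ℝ) - ((γ i).2 : ℝ)|},
      ∏ i ∈ Finset.range (pathLen u v), Y (γ.1 (i + 1))

/-- Set-to-set version of `ZppExitDiag`. -/
def ZssExitDiag (Y : ℤ × ℤ → ℝ) (k : ℝ) (A B : Set (ℤ × ℤ)) : ℝ :=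
  ∑' (a : A) (b : B), ZppExitDiag Y k ↑a ↑b

/-- The anti-diagonal line `L_a` through the lattice point `a`. -/
def antiLine (a : ℤ × ℤ) : Set (ℤ × ℤ) := {x | x.1 + x.2 = a.1 + a.2}

/-- The anti-diagonal segment `L_a^k` of `ℓ^∞`-radius `k` centered at `a`. -/
def antiSeg (a : ℤ × ℤ) (k : ℝ) : Set (ℤ × ℤ) :=
  {x | x.1 + x.2 = a.1 + a.2 ∧ |(x.1 : ℝ) - (a.1 : ℝ)| ≤ k}

/-- The lattice parallelogram `R^k_{u,v}` with corners `u ± (-k, k)` and `v ± (-k, k)`. -/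
def para (u v : ℤ × ℤ) (k : ℝ) : Set (ℤ × ℤ) :=
  {p | u.1 + u.2 ≤ p.1 + p.2 ∧ p.1 + p.2 ≤ v.1 + v.2 ∧
    |(((p.1 : ℝ) - (p.2 : ℝ)) - ((u.1 : ℝ) - (u.2 : ℝ))) -
        (((p.1 : ℝ) + (p.2 : ℝ)) - ((u.1 : ℝ) + (u.2 : ℝ))) /
            (((v.1 : ℝ) + (v.2 : ℝ)) - ((u.1 : ℝ) + (u.2 : ℝ))) *
          (((v.1 : ℝ) - (v.2 : ℝ)) - ((u.1 : ℝ) - (u.2 : ℝ)))| ≤ 2 * k}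

/-- The polygamma function `Ψ_k`, the `(k+1)`-st derivative of `log Γ`. -/
def polyGamma (k : ℕ) (s : ℝ) : ℝ :=
  iteratedDeriv (k + 1) (fun x => Real.log (Real.Gamma x)) s

/-- The characteristic direction `ξ[ρ]` of the inverse-gamma polymer with shape `m`. -/
def charDir (m ρ : ℝ) : ℝ × ℝ :=
  (polyGamma 1 ρ / (polyGamma 1 ρ + polyGamma 1 (m - ρ)),
    polyGamma 1 (m - ρ) / (polyGamma 1 ρ + polyGamma 1 (m - ρ)))

/-- The shape function `f(ρ)` of the inverse-gamma polymer with shape `m`. -/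
def shapeFn (m ρ : ℝ) : ℝ :=
  -((polyGamma 1 ρ * polyGamma 0 (m - ρ) + polyGamma 1 (m - ρ) * polyGamma 0 ρ) /
    (polyGamma 1 ρ + polyGamma 1 (m - ρ)))

/-- The lattice point obtained by rounding `2N ξ[ρ]`. -/
def dirTarget (m ρ : ℝ) (N : ℕ) : ℤ × ℤ :=
  (⌊2 * (N : ℝ) * (charDir m ρ).1⌋, ⌊2 * (N : ℝ) * (charDir m ρ).2⌋)

/-- Density of the inverse-gamma distribution with shape parameter `m`. -/
def invGammaPdf (m x : ℝ) : ℝ :=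
  if 0 < x then (Real.Gamma m)⁻¹ * x ^ (-m - 1) * Real.exp (-x⁻¹) else 0

/-- The inverse-gamma distribution with shape parameter `m`. -/
def invGammaMeasure (m : ℝ) : Measure ℝ :=
  MeasureTheory.volume.withDensity fun x => ENNReal.ofReal (invGammaPdf m x)

/-- The weights `Y z`, `z ∈ ℤ²`, are i.i.d. inverse-gamma with shape `m` under `P`. -/
def IsInvGammaEnv {Ω : Type*} [MeasurableSpace Ω] (P : Measure Ω) (m : ℝ)
    (Y : ℤ × ℤ → Ω → ℝ) : Prop :=
  (∀ z, Measurable (Y z)) ∧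
    iIndepFun Y P ∧
    ∀ z, P.map (Y z) = invGammaMeasure m

/-- Pearson correlation coefficient of two real random variables. -/
def corr {Ω : Type*} [MeasurableSpace Ω] (P : Measure Ω) (f g : Ω → ℝ) : ℝ :=
  ((∫ ω, f ω * g ω ∂P) - (∫ ω, f ω ∂P) * (∫ ω, g ω ∂P)) /
    (Real.sqrt (variance f P) * Real.sqrt (variance g P))

open Real Filter Topology in

noncomputable def dg (x : ℝ) : ℝ :=
  -Real.eulerMascheroniConstant - 1/x + ∑' m : ℕ, (1/(m+1) - 1/(x+m+1))
open Real Filter Topology in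
noncomputable def tg (x : ℝ) : ℝ := ∑' m : ℕ, 1/(x+m)^2
open Real Filter Topology in
lemma tg_summable {x : ℝ} (hx : 0 < x) : Summable (fun m : ℕ => 1/(x+m)^2) := by
  have := (Real.summable_one_div_nat_add_rpow x 2).mpr one_lt_two
  refine this.congr fun m => ?_
  have h1 : (0:ℝ) ≤ (m:ℝ) + x := by positivity
  rw [abs_of_nonneg h1]
  rw [show ((2:ℝ)) = ((2:ℕ):ℝ) by norm_num, Real.rpow_natCast]
  ring_nf
open Real Filter Topology in
lemma dg_term_nonneg {x : ℝ} (hx : 0 < x) (m : ℕ) :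
    0 ≤ 1/((m:ℝ)+1) - 1/(x+m+1) := by
  have h1 : (0:ℝ) < (m:ℝ)+1 := by positivity
  have h2 : (0:ℝ) < x+(m:ℝ)+1 := by positivity
  rw [sub_nonneg]
  apply one_div_le_one_div_of_le h1; linarith
open Real Filter Topology in
lemma dg_summable {x : ℝ} (hx : 0 < x) :
    Summable (fun m : ℕ => 1/((m:ℝ)+1) - 1/(x+m+1)) := by
  have hs : Summable (fun m : ℕ => x * (1/((m:ℝ)+1)^2)) := by
    apply Summable.mul_left
    simpa using (Real.summable_one_div_nat_add_rpow 1 2).mpr one_lt_two |>.congr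
      (fun m => by
        have : (0:ℝ) ≤ (m:ℝ)+1 := by positivity
        rw [abs_of_nonneg this, show ((2:ℝ)) = ((2:ℕ):ℝ) by norm_num, Real.rpow_natCast]
        rw [one_div])
  refine hs.of_nonneg_of_le (fun m => dg_term_nonneg hx m) (fun m => ?_)
  have h1 : (0:ℝ) < (m:ℝ)+1 := by positivity
  have h2 : (0:ℝ) < x+(m:ℝ)+1 := by positivity
  rw [div_sub_div _ _ (ne_of_gt h1) (ne_of_gt h2)]
  have hnum : 1*(x+(m:ℝ)+1) - ((m:ℝ)+1)*1 = x := by ring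
  rw [hnum, div_le_iff₀ (by positivity)]
  have : x * (1 / ((m:ℝ) + 1) ^ 2) * (((m:ℝ) + 1) * (x + (m:ℝ) + 1))
      = x * ((x+(m:ℝ)+1)/((m:ℝ)+1)) := by field_simp
  rw [this]
  have h3 : (1:ℝ) ≤ (x+(m:ℝ)+1)/((m:ℝ)+1) := (one_le_div h1).mpr (by linarith)
  nlinarith
open Real Filter Topology in
lemma dg_term_le {x : ℝ} (hx : 0 < x) (m : ℕ) :
    1/((m:ℝ)+1) - 1/(x+m+1) ≤ x * (1/((m:ℝ)+1)^2) := by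
  have h1 : (0:ℝ) < (m:ℝ)+1 := by positivity
  have h2 : (0:ℝ) < x+(m:ℝ)+1 := by positivity
  rw [div_sub_div _ _ (ne_of_gt h1) (ne_of_gt h2)]
  have hnum : 1*(x+(m:ℝ)+1) - ((m:ℝ)+1)*1 = x := by ring
  rw [hnum, div_le_iff₀ (by positivity)]
  have : x * (1 / ((m:ℝ) + 1) ^ 2) * (((m:ℝ) + 1) * (x + (m:ℝ) + 1))
      = x * ((x+(m:ℝ)+1)/((m:ℝ)+1)) := by field_simp
  rw [this]
  have h3 : (1:ℝ) ≤ (x+(m:ℝ)+1)/((m:ℝ)+1) := (one_le_div h1).mpr (by linarith)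
  nlinarith
open Real Filter Topology in
lemma inv_sq_summable : Summable (fun m : ℕ => 1/((m:ℝ)+1)^2) := by
  have := (Real.summable_one_div_nat_add_rpow 1 2).mpr one_lt_two
  refine this.congr fun m => ?_
  have : (0:ℝ) ≤ (m:ℝ)+1 := by positivity
  rw [abs_of_nonneg this, show ((2:ℝ)) = ((2:ℕ):ℝ) by norm_num, Real.rpow_natCast]
open Real Filter Topology in
lemma tuo_const_seq {c : ℕ → ℝ} {L : ℝ} (h : Filter.Tendsto c atTop (𝓝 L)) (s : Set ℝ) :
    TendstoUniformlyOn (fun n (_ : ℝ) => c n) (fun _ => L) atTop s := by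
  rw [Metric.tendstoUniformlyOn_iff]
  intro ε hε
  filter_upwards [h (Metric.ball_mem_nhds L hε)] with n hn x _
  simpa [dist_comm] using hn
open Real Filter Topology in
lemma tuo_const_fun (f : ℝ → ℝ) (s : Set ℝ) :
    TendstoUniformlyOn (fun (_ : ℕ) => f) f atTop s := by
  rw [Metric.tendstoUniformlyOn_iff]
  intro ε hε
  filter_upwards with n x _
  simpa using hε
open Real Filter Topology in
lemma hasDerivAt_logGammaSeq (n : ℕ) {x : ℝ} (hx : 0 < x) :
    HasDerivAt (fun y => Real.BohrMollerup.logGammaSeq y n)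
      (Real.log n - ∑ m ∈ Finset.range (n+1), 1/(x+m)) x := by
  have h1 : HasDerivAt (fun y : ℝ => y * Real.log n + Real.log (Nat.factorial n))
      (Real.log n) x := by
    simpa using ((hasDerivAt_id x).mul_const (Real.log n)).add_const
      (Real.log (Nat.factorial n))
  have h2 : HasDerivAt (fun y : ℝ => ∑ m ∈ Finset.range (n+1), Real.log (y + m))
      (∑ m ∈ Finset.range (n+1), 1/(x+m)) x := by
    apply HasDerivAt.fun_sum
    intro m _
    have hpos : (0:ℝ) < x + m := by positivity
    simpa [one_div] using ((hasDerivAt_id x).add_const (m:ℝ)).log (ne_of_gt hpos)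
  have := h1.sub h2
  exact this
open Real Filter Topology in
lemma dseq_eq (n : ℕ) {x : ℝ} (hx : x ≠ 0) :
    Real.log n - ∑ m ∈ Finset.range (n+1), 1/(x+m)
      = (Real.log n - (harmonic n : ℝ))
        + (-(1/x) + ∑ m ∈ Finset.range n, (1/((m:ℝ)+1) - 1/(x+m+1))) := by
  rw [Finset.sum_range_succ' (fun m => 1/(x+(m:ℝ)))]
  have hharm : (harmonic n : ℝ) = ∑ m ∈ Finset.range n, 1/((m:ℝ)+1) := by
    rw [harmonic]
    push_cast
    simp [one_div]
  have hsum : ∑ m ∈ Finset.range n, (1/((m:ℝ)+1) - 1/(x+m+1))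
      = (harmonic n : ℝ) - ∑ m ∈ Finset.range n, 1/(x+((m:ℝ)+1)) := by
    rw [Finset.sum_sub_distrib, hharm]
    congr 1
    exact Finset.sum_congr rfl (fun m _ => by rw [add_assoc])
  rw [hsum]
  push_cast
  ring
open Real Filter Topology in
lemma hasDerivAt_logGamma {x : ℝ} (hx : 0 < x) :
    HasDerivAt (fun y => Real.log (Real.Gamma y)) (dg x) x := by
  set T : ℝ → ℝ := fun y => ∑' m : ℕ, (1/((m:ℝ)+1) - 1/(y+m+1)) with hT
  apply hasDerivAt_of_tendstoLocallyUniformlyOn (l := atTop) (isOpen_Ioi)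
    (f := fun n y => Real.BohrMollerup.logGammaSeq y n)
    (f' := fun n y => (Real.log n - (harmonic n : ℝ))
        + (-(1/y) + ∑ m ∈ Finset.range n, (1/((m:ℝ)+1) - 1/(y+m+1))))
    (g' := dg) _ _ _ (Set.mem_Ioi.mpr hx)
  · rw [tendstoLocallyUniformlyOn_iff_forall_isCompact isOpen_Ioi]
    intro K hK hKc
    obtain ⟨R, hR⟩ := hKc.bddAbove
    have h1 : TendstoUniformlyOn
        (fun (n:ℕ) (_:ℝ) => Real.log n - (harmonic n : ℝ))
        (fun _ => -Real.eulerMascheroniConstant) atTop K := by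
      apply tuo_const_seq
      have := Real.tendsto_harmonic_sub_log.neg
      simpa [neg_sub] using this
    have h2 : TendstoUniformlyOn (fun (_:ℕ) (y:ℝ) => -(1/y)) (fun y => -(1/y)) atTop K :=
      tuo_const_fun _ K
    have h3 : TendstoUniformlyOn
        (fun (n:ℕ) (y:ℝ) => ∑ m ∈ Finset.range n, (1/((m:ℝ)+1) - 1/(y+m+1))) T atTop K := by
      apply tendstoUniformlyOn_tsum_nat (u := fun m => R * (1/((m:ℝ)+1)^2))
        (inv_sq_summable.mul_left R)
      intro m y hy
      have hy0 : 0 < y := hK hy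
      rw [Real.norm_eq_abs, abs_of_nonneg (dg_term_nonneg hy0 m)]
      calc 1/((m:ℝ)+1) - 1/(y+m+1) ≤ y * (1/((m:ℝ)+1)^2) := dg_term_le hy0 m
        _ ≤ R * (1/((m:ℝ)+1)^2) := by
            apply mul_le_mul_of_nonneg_right (hR hy) (by positivity)
    have h4 := (h1.add (h2.add h3)).congr (F' := fun (n : ℕ) (y : ℝ) =>
        (Real.log n - (harmonic n : ℝ)) + (-(1/y) + ∑ m ∈ Finset.range n, (1/((m:ℝ)+1) - 1/(y+m+1))))
      (by filter_upwards with n y _; simp [Pi.add_apply])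
    apply h4.congr_right
    intro y _
    simp only [dg, hT, Pi.add_apply]
    ring
  · filter_upwards with n
    intro y hy
    have := hasDerivAt_logGammaSeq n (Set.mem_Ioi.mp hy)
    rwa [dseq_eq n (ne_of_gt (Set.mem_Ioi.mp hy))] at this
  · intro y hy
    exact Real.BohrMollerup.tendsto_log_gamma (Set.mem_Ioi.mp hy)
open Real Filter Topology in
lemma hasDerivAt_dg {x : ℝ} (hx : 0 < x) : HasDerivAt dg (tg x) x := by
  have hT : HasDerivAt (fun y : ℝ => ∑' m : ℕ, (1/((m:ℝ)+1) - 1/(y+m+1)))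
      (∑' m : ℕ, 1/(x+m+1)^2) x := by
    apply hasDerivAt_of_tendstoUniformlyOn (l := atTop) (isOpen_Ioi)
      (f := fun (n:ℕ) (y:ℝ) => ∑ m ∈ Finset.range n, (1/((m:ℝ)+1) - 1/(y+m+1)))
      (f' := fun (n:ℕ) (y:ℝ) => ∑ m ∈ Finset.range n, 1/(y+m+1)^2)
      _ _ _ (Set.mem_Ioi.mpr hx)
    · have hsum : Summable (fun m : ℕ => 1/((m:ℝ)+1)^2) := inv_sq_summable
      have := tendstoUniformlyOn_tsum_nat (f := fun (m:ℕ) (y:ℝ) => 1/(y+m+1)^2) hsum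
        (s := Set.Ioi 0) (fun m y hy => ?_)
      · exact this
      · have hy0 : (0:ℝ) < y := hy
        rw [Real.norm_eq_abs, abs_of_nonneg (by positivity)]
        apply div_le_div_of_nonneg_left one_pos.le (by positivity)
        have : (0:ℝ) ≤ (m:ℝ)+1 := by positivity
        nlinarith
    · filter_upwards with n
      intro y hy
      have hy0 : (0:ℝ) < y := hy
      apply HasDerivAt.fun_sum
      intro m _
      have hpos : (0:ℝ) < y + m + 1 := by positivity
      have hinv : HasDerivAt (fun y : ℝ => (y+(m:ℝ)+1)⁻¹) (-(1/(y+m+1)^2)) y := by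
        have hid : HasDerivAt (fun y : ℝ => y+(m:ℝ)+1) 1 y := by
          simpa [add_assoc] using (hasDerivAt_id y).add_const ((m:ℝ)+1)
        have := hid.fun_inv (ne_of_gt hpos)
        rw [show -1/(y+(m:ℝ)+1)^2 = -(1/(y+(m:ℝ)+1)^2) by ring] at this
        simpa using this
      have := (hasDerivAt_const y (1/((m:ℝ)+1))).fun_sub hinv
      simpa [one_div] using this
    · intro y hy
      have hy0 : (0:ℝ) < y := hy
      exact (dg_summable hy0).hasSum.tendsto_sum_nat
  have hfirst : HasDerivAt (fun y : ℝ => -Real.eulerMascheroniConstant - 1/y) (1/x^2) x := by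
    have hinv : HasDerivAt (fun y : ℝ => 1/y) (-(1/x^2)) x := by
      have := (hasDerivAt_id x).fun_inv (ne_of_gt hx)
      simp only [id] at this
      rw [show -1/x^2 = -(1/x^2) by ring] at this
      simpa [one_div] using this
    simpa using (hasDerivAt_const x (-Real.eulerMascheroniConstant)).fun_sub hinv
  have htotal := hfirst.fun_add hT
  have : dg = fun y => (-Real.eulerMascheroniConstant - 1/y)
      + ∑' m : ℕ, (1/((m:ℝ)+1) - 1/(y+m+1)) := by
    funext y; simp [dg]
  rw [this]
  refine htotal.congr_deriv ?_
  rw [tg, Summable.tsum_eq_zero_add (tg_summable hx)]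
  have h0 : 1/(x+(0:ℕ))^2 = 1/x^2 := by norm_num
  rw [h0]
  congr 1
  exact tsum_congr fun m => by push_cast; ring_nf
open Real Filter Topology in

lemma polyGamma_zero_eq {x : ℝ} (hx : 0 < x) : polyGamma 0 x = dg x := by
  rw [polyGamma, iteratedDeriv_one]
  exact (hasDerivAt_logGamma hx).deriv
open Real Filter Topology in
lemma polyGamma_one_eq {x : ℝ} (hx : 0 < x) : polyGamma 1 x = tg x := by
  rw [polyGamma, iteratedDeriv_succ, iteratedDeriv_one]
  have hev : deriv (fun y => Real.log (Real.Gamma y)) =ᶠ[𝓝 x] dg := by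
    filter_upwards [Ioi_mem_nhds hx] with y hy using (hasDerivAt_logGamma hy).deriv
  rw [hev.deriv_eq]
  exact (hasDerivAt_dg hx).deriv
open Real Filter Topology in
lemma tg_pos {x : ℝ} (hx : 0 < x) : 0 < tg x := by
  refine Summable.tsum_pos (tg_summable hx) (fun m => by positivity) 0 (by positivity)
open Real Filter Topology in
lemma tg_antitone {x y : ℝ} (hx : 0 < x) (hxy : x ≤ y) : tg y ≤ tg x := by
  refine Summable.tsum_le_tsum (fun m => ?_) (tg_summable (lt_of_lt_of_le hx hxy)) (tg_summable hx)
  have h1 : (0:ℝ) < x + m := by positivity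
  apply div_le_div_of_nonneg_left one_pos.le (by positivity)
  nlinarith
open Real Filter Topology in
lemma dg_slope {u v : ℝ} (hu : 0 < u) (huv : u < v) :
    tg v * (v - u) ≤ dg v - dg u ∧ dg v - dg u ≤ tg u * (v - u) := by
  obtain ⟨ξ, hξ, hslope⟩ := exists_hasDerivAt_eq_slope dg tg huv
    (fun y hy => (hasDerivAt_dg (lt_of_lt_of_le hu hy.1)).continuousAt.continuousWithinAt)
    (fun y hy => hasDerivAt_dg (lt_trans hu hy.1))
  have hvu : (0:ℝ) < v - u := by linarith
  have heq : dg v - dg u = tg ξ * (v - u) := by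
    field_simp at hslope
    linarith [hslope]
  have hξ0 : 0 < ξ := lt_trans hu hξ.1
  have h1 : tg v ≤ tg ξ := tg_antitone hξ0 hξ.2.le
  have h2 : tg ξ ≤ tg u := tg_antitone hu hξ.1.le
  constructor
  · rw [heq]; nlinarith
  · rw [heq]; nlinarith

/-- the shape function is maximal in the diagonal direction. -/
theorem shape_max_on_diagonal (m : ℝ) (hm : 0 < m) :
    ∀ z : ℝ, -(m / 2) < z → z < m / 2 → shapeFn m (m / 2 + z) ≤ shapeFn m (m / 2) := by
  have key : ∀ z : ℝ, 0 ≤ z → z < m / 2 → shapeFn m (m / 2 + z) ≤ shapeFn m (m / 2) := by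
    intro z hz0 hz
    have hc : 0 < m / 2 := by linarith
    have hb : 0 < m / 2 - z := by linarith
    have ha : 0 < m / 2 + z := by linarith
    have h1 : m - (m / 2 + z) = m / 2 - z := by ring
    have h2 : m - m / 2 = m / 2 := by ring
    rw [shapeFn, shapeFn, h1, h2,
      polyGamma_one_eq ha, polyGamma_one_eq hb, polyGamma_one_eq hc,
      polyGamma_zero_eq ha, polyGamma_zero_eq hb, polyGamma_zero_eq hc]
    have hTa := tg_pos ha
    have hTb := tg_pos hb
    have hTc := tg_pos hc
    have hRHS : -((tg (m/2) * dg (m/2) + tg (m/2) * dg (m/2)) / (tg (m/2) + tg (m/2)))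
        = -(dg (m/2)) := by
      rw [show tg (m/2) * dg (m/2) + tg (m/2) * dg (m/2) = dg (m/2) * (tg (m/2) + tg (m/2)) by
        ring, mul_div_assoc, div_self (by positivity), mul_one]
    rw [hRHS]
    rcases eq_or_lt_of_le hz0 with hz0' | hz0'
    · subst hz0'
      rw [add_zero, sub_zero, show tg (m/2) * dg (m/2) + tg (m/2) * dg (m/2)
          = dg (m/2) * (tg (m/2) + tg (m/2)) by ring, mul_div_assoc,
        div_self (by positivity), mul_one]
    · apply neg_le_neg
      rw [le_div_iff₀ (by positivity)]
      have hs1 := (dg_slope hb (by linarith : m / 2 - z < m / 2)).2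
      have hs2 := (dg_slope hc (by linarith : m / 2 < m / 2 + z)).1
      have e1 : m / 2 - (m / 2 - z) = z := by ring
      have e2 : m / 2 + z - m / 2 = z := by ring
      rw [e1] at hs1
      rw [e2] at hs2
      nlinarith [mul_le_mul_of_nonneg_left hs1 hTa.le, mul_le_mul_of_nonneg_left hs2 hTb.le]
  intro z hz1 hz2
  rcases le_or_gt 0 z with hz0 | hz0
  · exact key z hz0 hz2
  · have hsym : shapeFn m (m / 2 + z) = shapeFn m (m / 2 + -z) := by
      rw [shapeFn, shapeFn, show m - (m / 2 + z) = m / 2 + -z by ring,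
        show m - (m / 2 + -z) = m / 2 + z by ring]
      ring_nf
    rw [hsym]
    exact key (-z) (by linarith) (by linarith)

end
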